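/- The polynomial map f(x,y,z) = (y, x + y − y³, 2z − y) is an automorphism of affine 3-space over ℚ, with inverse given by f⁻¹(x,y,z) = (y − x + x³, x, (z + x)/2) (i.e. f ∘ f⁻¹ = f⁻¹ ∘ f = id as polynomial maps). Moreover, writing deg(f^n) for the maximum of the total degrees of the three coordinate polynomials of the n-th iterate f^n ∈ ℚ[x,y,z]³, one has lim_{n→∞} deg(f^n)^{1/n} = 3 and lim_{n→∞} deg((f⁻¹)^n)^{1/n} = 3 (so the first and second dynamical degrees of f both equal 3). -/

import Mathlib

open MvPolynomial

/-- The coordinate polynomials of `f(x,y,z) = (y, x + y - y^3, 2z - y)`. -/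
noncomputable def fPoly : Fin 3 → MvPolynomial (Fin 3) ℚ :=
  ![X 1, X 0 + X 1 - (X 1) ^ 3, 2 * X 2 - X 1]

/-- The coordinate polynomials of `f⁻¹(x,y,z) = (y - x + x^3, x, (z + x)/2)`. -/
noncomputable def fInvPoly : Fin 3 → MvPolynomial (Fin 3) ℚ :=
  ![X 1 - X 0 + (X 0) ^ 3, X 0, C (1 / 2 : ℚ) * (X 2 + X 0)]

/-- Coordinate polynomials of the `n`-th iterate of `f`
(composition of polynomial maps is given by substitution, i.e. `bind₁`). -/
noncomputable def fIter : ℕ → Fin 3 → MvPolynomial (Fin 3) ℚ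
  | 0 => fun i => X i
  | n + 1 => fun i => bind₁ fPoly (fIter n i)

/-- Coordinate polynomials of the `n`-th iterate of `f⁻¹`. -/
noncomputable def fInvIter : ℕ → Fin 3 → MvPolynomial (Fin 3) ℚ
  | 0 => fun i => X i
  | n + 1 => fun i => bind₁ fInvPoly (fInvIter n i)

/-- `deg (f^n)`: the maximum of the total degrees of the coordinate polynomials of `f^n`. -/
noncomputable def degFIter (n : ℕ) : ℕ :=
  Finset.univ.sup fun i => (fIter n i).totalDegree

/-- `deg ((f⁻¹)^n)`. -/
noncomputable def degFInvIter (n : ℕ) : ℕ :=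
  Finset.univ.sup fun i => (fInvIter n i).totalDegree

/-! ### Auxiliary material -/

lemma hC : (C (2⁻¹ : ℚ) : MvPolynomial (Fin 3) ℚ) * 2 = 1 := by
  rw [← map_ofNat (C : ℚ →+* MvPolynomial (Fin 3) ℚ) 2, ← C_mul]
  norm_num

lemma fInv_comp_f : ∀ i, bind₁ fInvPoly (fPoly i) = X i := by
  intro i
  fin_cases i
  · simp [fPoly, fInvPoly]
  · simp [fPoly, fInvPoly]; ring
  · simp [fPoly, fInvPoly, map_ofNat]
    rw [show (2:MvPolynomial (Fin 3) ℚ) * (C (2⁻¹:ℚ) * (X 2 + X 0))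
        = (C (2⁻¹:ℚ) * 2) * (X 2 + X 0) by ring, hC]
    ring

lemma f_comp_fInv : ∀ i, bind₁ fPoly (fInvPoly i) = X i := by
  intro i
  fin_cases i
  · simp [fPoly, fInvPoly]; ring
  · simp [fPoly, fInvPoly]
  · simp [fPoly, fInvPoly, map_ofNat]
    rw [show (C (2⁻¹:ℚ) : MvPolynomial (Fin 3) ℚ) * (2 * X 2)
        = (C (2⁻¹:ℚ) * 2) * X 2 by ring, hC]
    ring

/-- One step of the orbit of a point under the polynomial map given by `P`. -/
noncomputable def step (P : Fin 3 → MvPolynomial (Fin 3) ℚ) (v : Fin 3 → Polynomial ℚ) :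
    Fin 3 → Polynomial ℚ := fun j => aeval v (P j)

noncomputable def line : Fin 3 → Polynomial ℚ := ![0, Polynomial.X, 0]

lemma aeval_fIter (v : Fin 3 → Polynomial ℚ) (n : ℕ) (i : Fin 3) :
    aeval v (fIter n i) = (step fPoly)^[n] v i := by
  induction n generalizing v with
  | zero => simp [fIter]
  | succ n ih =>
    show aeval v (bind₁ fPoly (fIter n i)) = _
    rw [aeval_bind₁, Function.iterate_succ_apply]
    exact ih (step fPoly v)

lemma step_fPoly_zero (v : Fin 3 → Polynomial ℚ) : step fPoly v 0 = v 1 := by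
  simp [step, fPoly]

lemma step_fPoly_one (v : Fin 3 → Polynomial ℚ) :
    step fPoly v 1 = (v 0 + v 1) + (-(v 1 ^ 3)) := by
  simp [step, fPoly]; ring

lemma orbitF (n : ℕ) :
    ((step fPoly)^[n] line 1).natDegree = 3 ^ n ∧
    ((step fPoly)^[n] line 1).leadingCoeff = (-1 : ℚ) ^ n ∧
    ((step fPoly)^[n] line 0).natDegree < 3 ^ n := by
  induction n with
  | zero =>
    refine ⟨?_, ?_, ?_⟩ <;> simp [line]
  | succ n ih =>
    obtain ⟨hq, hl, hp⟩ := ih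
    set p := (step fPoly)^[n] line 0
    set q := (step fPoly)^[n] line 1
    have hq3deg : (q ^ 3).natDegree = 3 ^ (n + 1) := by
      rw [Polynomial.natDegree_pow, hq, pow_succ, mul_comm]
    have hq3lc : (q ^ 3).leadingCoeff = (-1 : ℚ) ^ n := by
      rw [Polynomial.leadingCoeff_pow, hl, ← pow_mul]
      have : (-1 : ℚ) ^ (n * 3) = (-1) ^ n := by
        rw [mul_comm, pow_mul]; norm_num
      exact this
    have hsmall : (p + q).natDegree < 3 ^ (n + 1) := by
      refine lt_of_le_of_lt (Polynomial.natDegree_add_le _ _) ?_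
      have h1 : (3:ℕ) ^ n < 3 ^ (n+1) := by
        have := Nat.pow_lt_pow_succ (a := 3) (by norm_num) (n := n)
        simpa using this
      exact max_lt (lt_trans hp h1) (hq ▸ h1)
    have hnd : (p + q).natDegree < (-(q^3)).natDegree := by
      rwa [Polynomial.natDegree_neg, hq3deg]
    rw [Function.iterate_succ_apply', step_fPoly_one, step_fPoly_zero]
    refine ⟨?_, ?_, ?_⟩
    · rw [Polynomial.natDegree_add_eq_right_of_natDegree_lt hnd,
        Polynomial.natDegree_neg, hq3deg]
    · rw [Polynomial.leadingCoeff_add_of_degree_lt (Polynomial.degree_lt_degree hnd),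
        Polynomial.leadingCoeff_neg, hq3lc, pow_succ]
      ring
    · rw [hq]
      have := Nat.pow_lt_pow_succ (a := 3) (by norm_num) (n := n)
      simpa using this

lemma totalDegree_bind_le (g : Fin 3 → MvPolynomial (Fin 3) ℚ) {d : ℕ}
    (hg : ∀ j, (g j).totalDegree ≤ d) (p : MvPolynomial (Fin 3) ℚ) :
    (bind₁ g p).totalDegree ≤ d * p.totalDegree := by
  conv_lhs => rw [p.as_sum]
  rw [map_sum]
  refine totalDegree_finsetSum_le ?_
  intro v hv
  rw [show (bind₁ g : MvPolynomial (Fin 3) ℚ →ₐ[ℚ] _) = aeval g from rfl, aeval_monomial]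
  refine (totalDegree_mul _ _).trans ?_
  have h1 : (algebraMap ℚ (MvPolynomial (Fin 3) ℚ) (coeff v p)).totalDegree = 0 :=
    totalDegree_C _
  rw [h1, zero_add]
  refine (totalDegree_finset_prod _ _).trans ?_
  calc ∑ j ∈ v.support, (g j ^ v j).totalDegree
      ≤ ∑ j ∈ v.support, v j * d := by
        refine Finset.sum_le_sum fun j _ => ?_
        exact (totalDegree_pow _ _).trans (Nat.mul_le_mul_left _ (hg j))
    _ = (∑ j ∈ v.support, v j) * d := by rw [Finset.sum_mul]
    _ ≤ p.totalDegree * d := Nat.mul_le_mul_right _ (le_totalDegree hv)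
    _ = d * p.totalDegree := Nat.mul_comm _ _

lemma natDegree_aeval_le (g : Fin 3 → Polynomial ℚ) (hg : ∀ j, (g j).natDegree ≤ 1)
    (p : MvPolynomial (Fin 3) ℚ) :
    (aeval g p).natDegree ≤ p.totalDegree := by
  conv_lhs => rw [p.as_sum]
  rw [map_sum]
  refine Polynomial.natDegree_sum_le_of_forall_le _ _ ?_
  intro v hv
  rw [aeval_monomial]
  refine Polynomial.natDegree_mul_le.trans ?_
  have h1 : (algebraMap ℚ (Polynomial ℚ) (coeff v p)).natDegree = 0 :=
    Polynomial.natDegree_C _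
  rw [h1, zero_add]
  refine (Polynomial.natDegree_prod_le _ _).trans ?_
  calc ∑ j ∈ v.support, (g j ^ v j).natDegree
      ≤ ∑ j ∈ v.support, v j := by
        refine Finset.sum_le_sum fun j _ => ?_
        refine Polynomial.natDegree_pow_le.trans ?_
        calc v j * (g j).natDegree ≤ v j * 1 := Nat.mul_le_mul_left _ (hg j)
          _ = v j := Nat.mul_one _
    _ ≤ p.totalDegree := le_totalDegree hv

lemma fPoly_totalDegree_le : ∀ j, (fPoly j).totalDegree ≤ 3 := by
  intro j
  have h2 : (2 : MvPolynomial (Fin 3) ℚ) = C 2 := (map_ofNat C 2).symm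
  fin_cases j
  · simp [fPoly]
  · show ((X 0 + X 1 : MvPolynomial (Fin 3) ℚ) - X 1 ^ 3).totalDegree ≤ 3
    refine (totalDegree_sub _ _).trans (max_le ?_ ?_)
    · exact (totalDegree_add _ _).trans (by simp)
    · exact (totalDegree_pow _ _).trans (by simp)
  · show ((2 * X 2 : MvPolynomial (Fin 3) ℚ) - X 1).totalDegree ≤ 3
    refine (totalDegree_sub _ _).trans (max_le ?_ ?_)
    · refine (totalDegree_mul _ _).trans ?_
      rw [h2]
      simp
    · simp

lemma line_natDegree_le : ∀ j, (line j).natDegree ≤ 1 := by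
  intro j; fin_cases j <;> simp [line]

lemma fIter_totalDegree_le (n : ℕ) (i : Fin 3) : (fIter n i).totalDegree ≤ 3 ^ n := by
  induction n generalizing i with
  | zero => simp [fIter]
  | succ n ih =>
    show (bind₁ fPoly (fIter n i)).totalDegree ≤ _
    refine (totalDegree_bind_le fPoly fPoly_totalDegree_le _).trans ?_
    rw [pow_succ, mul_comm (3^n) 3]
    exact Nat.mul_le_mul_left 3 (ih i)

lemma degFIter_eq (n : ℕ) : degFIter n = 3 ^ n := by
  refine le_antisymm (Finset.sup_le fun i _ => fIter_totalDegree_le n i) ?_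
  have h := natDegree_aeval_le line line_natDegree_le (fIter n 1)
  rw [aeval_fIter, (orbitF n).1] at h
  exact h.trans (Finset.le_sup (f := fun i => (fIter n i).totalDegree)
    (Finset.mem_univ (1 : Fin 3)))

lemma aeval_fInvIter (v : Fin 3 → Polynomial ℚ) (n : ℕ) (i : Fin 3) :
    aeval v (fInvIter n i) = (step fInvPoly)^[n] v i := by
  induction n generalizing v with
  | zero => simp [fInvIter]
  | succ n ih =>
    show aeval v (bind₁ fInvPoly (fInvIter n i)) = _
    rw [aeval_bind₁, Function.iterate_succ_apply]
    exact ih (step fInvPoly v)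

lemma step_fInvPoly_zero (v : Fin 3 → Polynomial ℚ) :
    step fInvPoly v 0 = (v 1 - v 0) + v 0 ^ 3 := by
  simp [step, fInvPoly]

lemma step_fInvPoly_one (v : Fin 3 → Polynomial ℚ) : step fInvPoly v 1 = v 0 := by
  simp [step, fInvPoly]

lemma orbitFInv (m : ℕ) :
    ((step fInvPoly)^[m + 1] line 0).natDegree = 3 ^ m ∧
    ((step fInvPoly)^[m + 1] line 0).leadingCoeff = 1 ∧
    ((step fInvPoly)^[m + 1] line 1).natDegree ≤ 3 ^ m := by
  induction m with
  | zero =>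
    rw [Function.iterate_one, step_fInvPoly_zero, step_fInvPoly_one]
    refine ⟨?_, ?_, ?_⟩ <;> simp [line]
  | succ m ih =>
    obtain ⟨hp, hl, hq⟩ := ih
    set p := (step fInvPoly)^[m + 1] line 0
    set q := (step fInvPoly)^[m + 1] line 1
    have hp3deg : (p ^ 3).natDegree = 3 ^ (m + 1) := by
      rw [Polynomial.natDegree_pow, hp, pow_succ, mul_comm]
    have hp3lc : (p ^ 3).leadingCoeff = 1 := by
      rw [Polynomial.leadingCoeff_pow, hl, one_pow]
    have hsmall : (q - p).natDegree < 3 ^ (m + 1) := by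
      refine lt_of_le_of_lt (Polynomial.natDegree_sub_le _ _) ?_
      have h1 : (3:ℕ) ^ m < 3 ^ (m+1) := by
        have := Nat.pow_lt_pow_succ (a := 3) (by norm_num) (n := m)
        simpa using this
      exact max_lt (lt_of_le_of_lt hq h1) (hp ▸ h1)
    have hnd : (q - p).natDegree < (p ^ 3).natDegree := by rwa [hp3deg]
    rw [Function.iterate_succ_apply', step_fInvPoly_zero, step_fInvPoly_one]
    refine ⟨?_, ?_, ?_⟩
    · rw [Polynomial.natDegree_add_eq_right_of_natDegree_lt hnd, hp3deg]
    · rw [Polynomial.leadingCoeff_add_of_degree_lt (Polynomial.degree_lt_degree hnd), hp3lc]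
    · rw [hp]
      exact le_of_lt (by
        have := Nat.pow_lt_pow_succ (a := 3) (by norm_num) (n := m)
        simpa using this)

lemma fInvPoly_totalDegree_le : ∀ j, (fInvPoly j).totalDegree ≤ 3 := by
  intro j
  fin_cases j
  · show ((X 1 - X 0 : MvPolynomial (Fin 3) ℚ) + X 0 ^ 3).totalDegree ≤ 3
    refine (totalDegree_add _ _).trans (max_le ?_ ?_)
    · exact (totalDegree_sub _ _).trans (by simp)
    · exact (totalDegree_pow _ _).trans (by simp)
  · simp [fInvPoly]
  · show ((C (1/2 : ℚ) : MvPolynomial (Fin 3) ℚ) * (X 2 + X 0)).totalDegree ≤ 3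
    refine (totalDegree_mul _ _).trans ?_
    rw [totalDegree_C, zero_add]
    exact (totalDegree_add _ _).trans (by simp)

lemma fInvIter_totalDegree_le (n : ℕ) (i : Fin 3) : (fInvIter n i).totalDegree ≤ 3 ^ n := by
  induction n generalizing i with
  | zero => simp [fInvIter]
  | succ n ih =>
    show (bind₁ fInvPoly (fInvIter n i)).totalDegree ≤ _
    refine (totalDegree_bind_le fInvPoly fInvPoly_totalDegree_le _).trans ?_
    rw [pow_succ, mul_comm (3^n) 3]
    exact Nat.mul_le_mul_left 3 (ih i)

lemma degFInvIter_le (n : ℕ) : degFInvIter n ≤ 3 ^ n :=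
  Finset.sup_le fun i _ => fInvIter_totalDegree_le n i

lemma degFInvIter_ge (m : ℕ) : 3 ^ m ≤ degFInvIter (m + 1) := by
  have h := natDegree_aeval_le line line_natDegree_le (fInvIter (m + 1) 0)
  rw [aeval_fInvIter, (orbitFInv m).1] at h
  exact h.trans (Finset.le_sup (f := fun i => (fInvIter (m+1) i).totalDegree)
    (Finset.mem_univ (0 : Fin 3)))

lemma rpow_pow_inv (n : ℕ) (hn : 1 ≤ n) : (((3:ℕ) ^ n : ℕ) : ℝ) ^ ((n : ℝ)⁻¹) = 3 := by
  have hn0 : (n : ℝ) ≠ 0 := Nat.cast_ne_zero.mpr (by omega)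
  have hcast : (((3:ℕ) ^ n : ℕ) : ℝ) = (3:ℝ) ^ ((n : ℕ) : ℝ) := by
    push_cast
    rw [Real.rpow_natCast]
  rw [hcast, ← Real.rpow_mul (by norm_num), mul_inv_cancel₀ hn0, Real.rpow_one]

lemma limF : Filter.Tendsto (fun n : ℕ => (degFIter n : ℝ) ^ ((n : ℝ)⁻¹))
    Filter.atTop (nhds 3) := by
  refine Filter.Tendsto.congr' ?_ tendsto_const_nhds
  filter_upwards [Filter.eventually_ge_atTop 1] with n hn
  rw [degFIter_eq]
  exact (rpow_pow_inv n hn).symm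

lemma limFInv : Filter.Tendsto (fun n : ℕ => (degFInvIter n : ℝ) ^ ((n : ℝ)⁻¹))
    Filter.atTop (nhds 3) := by
  have h0 : Filter.Tendsto (fun n : ℕ => -((n:ℝ)⁻¹)) Filter.atTop (nhds 0) := by
    simpa using (tendsto_inv_atTop_nhds_zero_nat (𝕜 := ℝ)).neg
  have h1 : Filter.Tendsto (fun n : ℕ => (3:ℝ) ^ (-((n:ℝ)⁻¹))) Filter.atTop (nhds 1) := by
    have := Filter.Tendsto.rpow
      (tendsto_const_nhds : Filter.Tendsto (fun _ : ℕ => (3:ℝ)) Filter.atTop (nhds 3))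
      h0 (Or.inl (by norm_num))
    simpa using this
  have hlow : Filter.Tendsto (fun n : ℕ => 3 * (3:ℝ) ^ (-((n:ℝ)⁻¹)))
      Filter.atTop (nhds 3) := by
    simpa using tendsto_const_nhds.mul h1
  refine tendsto_of_tendsto_of_tendsto_of_le_of_le' hlow tendsto_const_nhds ?_ ?_
  · filter_upwards [Filter.eventually_ge_atTop 1] with n hn
    have hn0 : (n : ℝ) ≠ 0 := Nat.cast_ne_zero.mpr (by omega)
    have hcast : ((3 ^ (n-1) : ℕ) : ℝ) = (3:ℝ) ^ (((n-1:ℕ)) : ℝ) := by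
      push_cast
      rw [Real.rpow_natCast]
    have hle : ((3 ^ (n-1) : ℕ) : ℝ) ≤ (degFInvIter n : ℝ) := by
      have h : (3:ℕ) ^ (n-1) ≤ degFInvIter n := by
        obtain ⟨m, rfl⟩ := Nat.exists_eq_add_of_le hn
        simpa [Nat.add_comm] using degFInvIter_ge m
      exact_mod_cast h
    have key : 3 * (3:ℝ) ^ (-((n:ℝ)⁻¹)) = ((3 ^ (n-1) : ℕ) : ℝ) ^ ((n:ℝ)⁻¹) := by
      rw [hcast, ← Real.rpow_mul (by norm_num),
        show (3:ℝ) * (3:ℝ) ^ (-((n:ℝ)⁻¹)) = (3:ℝ) ^ (1 + -((n:ℝ)⁻¹)) by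
          rw [Real.rpow_add (by norm_num), Real.rpow_one]]
      congr 1
      rw [Nat.cast_sub hn, Nat.cast_one]
      field_simp
      ring
    rw [key]
    exact Real.rpow_le_rpow (by positivity) hle (by positivity)
  · filter_upwards [Filter.eventually_ge_atTop 1] with n hn
    have h : (degFInvIter n : ℝ) ≤ ((3^n : ℕ) : ℝ) := by exact_mod_cast degFInvIter_le n
    calc (degFInvIter n : ℝ) ^ ((n:ℝ)⁻¹) ≤ ((3^n : ℕ) : ℝ) ^ ((n:ℝ)⁻¹) :=
        Real.rpow_le_rpow (by positivity) h (by positivity)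
      _ = 3 := rpow_pow_inv n hn

/-- The polynomial map `f(x,y,z) = (y, x + y - y³, 2z - y)` is an automorphism of `𝔸³_ℚ`
with inverse `f⁻¹(x,y,z) = (y - x + x³, x, (z + x)/2)`, and
`lim deg(f^n)^{1/n} = lim deg((f⁻¹)^n)^{1/n} = 3`,
i.e. the first and second dynamical degrees of `f` are both `3`. -/
theorem stmt0 :
    (∀ i, bind₁ fInvPoly (fPoly i) = X i) ∧
    (∀ i, bind₁ fPoly (fInvPoly i) = X i) ∧
    Filter.Tendsto (fun n : ℕ => (degFIter n : ℝ) ^ ((n : ℝ)⁻¹)) Filter.atTop (nhds 3) ∧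
    Filter.Tendsto (fun n : ℕ => (degFInvIter n : ℝ) ^ ((n : ℝ)⁻¹)) Filter.atTop (nhds 3) := by
  exact ⟨fInv_comp_f, f_comp_fInv, limF, limFInv⟩
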